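/- Let E be an exact category and let A and B be full subcategories closed under extensions. Assume: (a) every morphism from an object of A to an object of B is zero; and (b) every object x of E fits into an exact sequence a ↣ x ↠ b with a ∈ A and b ∈ B. Then the inclusion functor A → E admits a right adjoint p such that for each x the counit p(x) → x is the inclusion of such an exact sequence, and the inclusion functor B → E admits a left adjoint q such that for each x the unit x → q(x) is the projection of such an exact sequence; in particular there is a natural exact sequence p(x) ↣ x ↠ q(x). -/

import Mathlib

/-!
Basic definitions: exact (∞-)categories à la Barwick (1-categorical formalization).
An exact structure on an additive category consists of two wide subcategories of
"inclusions" and "projections" subject to the axioms below.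
-/

open CategoryTheory CategoryTheory.Limits

universe w v u v₂ u₂

namespace ExactPaper

variable {E : Type u} [Category.{v} E]

/-- `ι` is a kernel of `f`. -/
def IsKernelι [Preadditive E] {k x y : E} (ι : k ⟶ x) (f : x ⟶ y) : Prop :=
  ∃ w : ι ≫ f = 0, Nonempty (IsLimit (KernelFork.ofι ι w))

/-- `π` is a cokernel of `f`. -/
def IsCokernelπ [Preadditive E] {x y c : E} (f : x ⟶ y) (π : y ⟶ c) : Prop :=
  ∃ w : f ≫ π = 0, Nonempty (IsColimit (CokernelCofork.ofπ π w))

/-- An exact structure on an additive category `E`: two wide subcategories of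
inclusions (`↣`) and projections (`↠`) satisfying Barwick's axioms.  In the axiom
`exact_square`, the square has top edge `i : x ⟶ y`, left edge `p : x ⟶ x'`,
right edge `q : y ⟶ y'` and bottom edge `j : x' ⟶ y'`. -/
structure ExactStructure (E : Type u) [Category.{v} E] [Preadditive E] where
  /-- the class of inclusions -/
  IsIncl : ∀ ⦃x y : E⦄, (x ⟶ y) → Prop
  /-- the class of projections -/
  IsProj : ∀ ⦃x y : E⦄, (x ⟶ y) → Prop
  incl_id : ∀ x : E, IsIncl (𝟙 x)
  incl_comp : ∀ {x y z : E} (f : x ⟶ y) (g : y ⟶ z), IsIncl f → IsIncl g → IsIncl (f ≫ g)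
  proj_id : ∀ x : E, IsProj (𝟙 x)
  proj_comp : ∀ {x y z : E} (f : x ⟶ y) (g : y ⟶ z), IsProj f → IsProj g → IsProj (f ≫ g)
  incl_from_zero : ∀ {z x : E}, IsZero z → ∀ f : z ⟶ x, IsIncl f
  proj_to_zero : ∀ {x z : E}, IsZero z → ∀ f : x ⟶ z, IsProj f
  /-- pushouts of inclusions along arbitrary morphisms exist -/
  pushout_incl : ∀ {x y x' : E} (i : x ⟶ y) (f : x ⟶ x'), IsIncl i →
    ∃ (y' : E) (g : y ⟶ y') (j : x' ⟶ y'), IsPushout i f g j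
  /-- inclusions are stable under pushout -/
  incl_pushout_stable : ∀ {x y x' y' : E} {i : x ⟶ y} {f : x ⟶ x'} {g : y ⟶ y'} {j : x' ⟶ y'},
    IsPushout i f g j → IsIncl i → IsIncl j
  /-- pullbacks of projections along arbitrary morphisms exist -/
  pullback_proj : ∀ {y z z' : E} (p : y ⟶ z) (f : z' ⟶ z), IsProj p →
    ∃ (y' : E) (g : y' ⟶ y) (q : y' ⟶ z'), IsPullback g q p f
  /-- projections are stable under pullback -/
  proj_pullback_stable : ∀ {y' z' y z : E} {g : y' ⟶ y} {q : y' ⟶ z'} {p : y ⟶ z} {f : z' ⟶ z},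
    IsPullback g q p f → IsProj p → IsProj q
  /-- compatibility: the pushout and pullback descriptions of exact squares agree -/
  exact_square : ∀ {x y x' y' : E} (i : x ⟶ y) (p : x ⟶ x') (q : y ⟶ y') (j : x' ⟶ y'),
    i ≫ q = p ≫ j →
    ((IsIncl i ∧ IsProj p ∧ IsPushout i p q j) ↔ (IsIncl j ∧ IsProj q ∧ IsPullback i p q j))

/-- An exact sequence `x ↣ y ↠ z`: an inclusion which is a kernel of a projection
which is in turn a cokernel of the inclusion. -/
def IsExactSeq [Preadditive E] (S : ExactStructure E) {x y z : E} (i : x ⟶ y) (p : y ⟶ z) :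
    Prop :=
  S.IsIncl i ∧ S.IsProj p ∧ IsKernelι i p ∧ IsCokernelπ i p

end ExactPaper

namespace ExactPaper

/-- Let `E` be an exact category and let `A`, `B` be full subcategories
closed under extensions such that (a) every morphism from an object of `A` to an object
of `B` is zero, and (b) every object `x` fits into an exact sequence `a ↣ x ↠ b` with
`a ∈ A`, `b ∈ B`.  Then the inclusion of `A` admits a right adjoint `p` with counit
`p(x) ⟶ x` an inclusion, the inclusion of `B` admits a left adjoint `q` with unit
`x ⟶ q(x)` a projection, and `p(x) ↣ x ↠ q(x)` is a (natural) exact sequence. -/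
theorem sod_adjoints {E : Type u} [Category.{v} E] [Preadditive E]
    (S : ExactStructure E) (A B : E → Prop)
    (hA₀ : ∃ z : E, IsZero z ∧ A z)
    (hAext : ∀ {u y w : E} (i : u ⟶ y) (π : y ⟶ w), IsExactSeq S i π → A u → A w → A y)
    (hB₀ : ∃ z : E, IsZero z ∧ B z)
    (hBext : ∀ {u y w : E} (i : u ⟶ y) (π : y ⟶ w), IsExactSeq S i π → B u → B w → B y)
    (horth : ∀ {a b : E}, A a → B b → ∀ f : a ⟶ b, f = 0)
    (hdec : ∀ x : E, ∃ (a : E) (i : a ⟶ x) (b : E) (π : x ⟶ b),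
      A a ∧ B b ∧ IsExactSeq S i π) :
    ∃ (p : E ⥤ ObjectProperty.FullSubcategory A) (adjA : ObjectProperty.ι A ⊣ p)
      (q : E ⥤ ObjectProperty.FullSubcategory B) (adjB : q ⊣ ObjectProperty.ι B),
      ∀ x : E, IsExactSeq S (adjA.counit.app x) (adjB.unit.app x) := by
  classical
  choose a i b π hAa hBb hex using hdec
  -- extract the kernel/cokernel data
  have hw : ∀ x, i x ≫ π x = 0 := fun x => (hex x).2.2.1.choose
  have hk : ∀ x, IsLimit (KernelFork.ofι (i x) (hw x)) := fun x =>
    ((hex x).2.2.1.choose_spec).some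
  have hc : ∀ x, IsColimit (CokernelCofork.ofπ (π x) (hw x)) := fun x =>
    ((hex x).2.2.2.choose_spec).some
  -- universal property of i x among maps from A-objects
  have liftA : ∀ {c : E}, A c → ∀ (x : E) (f : c ⟶ x), ∃! l : c ⟶ a x, l ≫ i x = f := by
    intro c hcA x f
    have hf : f ≫ π x = 0 := horth hcA (hBb x) _
    obtain ⟨l, hl⟩ := KernelFork.IsLimit.lift' (hk x) f hf
    refine ⟨l, hl, fun l' hl' => ?_⟩
    apply Fork.IsLimit.hom_ext (hk x)
    exact hl'.trans hl.symm
  -- universal property of π x among maps to B-objects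
  have descB : ∀ {c : E}, B c → ∀ (x : E) (g : x ⟶ c), ∃! d : b x ⟶ c, π x ≫ d = g := by
    intro c hcB x g
    have hg : i x ≫ g = 0 := horth (hAa x) hcB _
    obtain ⟨d, hd⟩ := CokernelCofork.IsColimit.desc' (hc x) g hg
    refine ⟨d, hd, fun d' hd' => ?_⟩
    apply Cofork.IsColimit.hom_ext (hc x)
    exact hd'.trans hd.symm
  -- the right adjoint p
  set pObj : E → ObjectProperty.FullSubcategory A := fun x => ⟨a x, hAa x⟩ with hpObj
  let eA : ∀ (X : ObjectProperty.FullSubcategory A) (Y : E),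
      ((ObjectProperty.ι A).obj X ⟶ Y) ≃ (X ⟶ pObj Y) := fun X Y =>
    { toFun := fun f => ObjectProperty.homMk (liftA X.2 Y f).choose
      invFun := fun g => g.hom ≫ i Y
      left_inv := fun f => (liftA X.2 Y f).choose_spec.1
      right_inv := fun g => ObjectProperty.hom_ext _
        ((liftA X.2 Y (g.hom ≫ i Y)).choose_spec.2 g.hom rfl).symm }
  have heA : ∀ (X' X : ObjectProperty.FullSubcategory A) (Y : E) (f : X' ⟶ X)
      (g : (ObjectProperty.ι A).obj X ⟶ Y),
      eA X' Y ((ObjectProperty.ι A).map f ≫ g) = f ≫ eA X Y g := by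
    intro X' X Y f g
    have h1 := (liftA X'.2 Y ((ObjectProperty.ι A).map f ≫ g)).choose_spec.2
    let f' : X'.obj ⟶ X.obj := f.hom
    have key : (f' ≫ ((eA X Y) g).hom) ≫ i Y = f' ≫ g := by
      rw [Category.assoc]
      congr 1
      exact (liftA X.2 Y g).choose_spec.1
    apply ObjectProperty.hom_ext
    exact (h1 _ key).symm
  -- the left adjoint q
  let qObj : E → ObjectProperty.FullSubcategory B := fun x => ⟨b x, hBb x⟩
  let eB : ∀ (X : E) (Y : ObjectProperty.FullSubcategory B),
      (qObj X ⟶ Y) ≃ (X ⟶ (ObjectProperty.ι B).obj Y) := fun X Y =>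
    { toFun := fun g => π X ≫ g.hom
      invFun := fun h => ObjectProperty.homMk (descB Y.2 X h).choose
      left_inv := fun g => ObjectProperty.hom_ext _
        ((descB Y.2 X (π X ≫ g.hom)).choose_spec.2 g.hom rfl).symm
      right_inv := fun h => (descB Y.2 X h).choose_spec.1 }
  have heB : ∀ (X : E) (Y Y' : ObjectProperty.FullSubcategory B) (g : Y ⟶ Y') (h : qObj X ⟶ Y),
      eB X Y' (h ≫ g) = eB X Y h ≫ (ObjectProperty.ι B).map g := fun X Y Y' g h =>
    (Category.assoc _ _ _).symm
  refine ⟨Adjunction.rightAdjointOfEquiv eA heA, Adjunction.adjunctionOfEquivRight eA heA,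
    Adjunction.leftAdjointOfEquiv eB heB, Adjunction.adjunctionOfEquivLeft eB heB, ?_⟩
  intro x
  have h1 : (Adjunction.adjunctionOfEquivRight eA heA).counit.app x = 𝟙 (a x) ≫ i x := rfl
  have h2 : (Adjunction.adjunctionOfEquivLeft eB heB).unit.app x = π x ≫ 𝟙 (b x) := rfl
  rw [h1, h2, Category.id_comp, Category.comp_id]
  exact hex x


end ExactPaper
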